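/- Let f be positive definite on a set S ⊆ ℂ, and let x, y, β ∈ ℝ be such that x + iy ∈ S, −x + iy ∈ S, i(y − β) ∈ S and i(y + β) ∈ S. Then f(i(y−β)) and f(i(y+β)) are nonnegative real numbers and |f(x+iy)|² ≤ f(i(y−β)) · f(i(y+β)). -/

import Mathlib

open Complex MeasureTheory Filter Set Topology
open scoped Real BigOperators ComplexOrder

noncomputable section

/-- `f : ℝ → ℂ` is positive definite. -/
def IsPosDefFun (f : ℝ → ℂ) : Prop :=
  ∀ (n : ℕ) (x : Fin n → ℝ) (ξ : Fin n → ℂ),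
    0 ≤ ∑ k, ∑ l, f (x k - x l) * ξ k * (starRingEnd ℂ) (ξ l)

/-- `f` is positive definite on `S ⊆ ℂ`. -/
def IsPosDefOnC (f : ℂ → ℂ) (S : Set ℂ) : Prop :=
  ∀ (n : ℕ) (z : Fin n → ℂ), (∀ k l, z k - (starRingEnd ℂ) (z l) ∈ S) →
    ∀ ξ : Fin n → ℂ,
      0 ≤ ∑ k, ∑ l, f (z k - (starRingEnd ℂ) (z l)) * ξ k * (starRingEnd ℂ) (ξ l)

/-- `f` is co-positive definite on `T ⊆ ℂ`. -/
def IsCoPosDefOnC (f : ℂ → ℂ) (T : Set ℂ) : Prop :=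
  ∀ (n : ℕ) (z : Fin n → ℂ), (∀ k l, z k + (starRingEnd ℂ) (z l) ∈ T) →
    ∀ ξ : Fin n → ℂ,
      0 ≤ ∑ k, ∑ l, f (z k + (starRingEnd ℂ) (z l)) * ξ k * (starRingEnd ℂ) (ξ l)

/-- `G : ℝ → ℂ` is co-positive definite on `I ⊆ ℝ`. -/
def IsCoPosDefOnR (G : ℝ → ℂ) (I : Set ℝ) : Prop :=
  ∀ (n : ℕ) (x : Fin n → ℝ), (∀ k l, x k + x l ∈ I) →
    ∀ ξ : Fin n → ℂ,
      0 ≤ ∑ k, ∑ l, G (x k + x l) * ξ k * (starRingEnd ℂ) (ξ l)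

/-- Horizontal strip `S_{a,b}`. -/
def HStrip (a b : EReal) : Set ℂ := {z | a < (z.im : EReal) ∧ (z.im : EReal) < b}

/-- Vertical strip `T_{a,b}`. -/
def VStrip (a b : EReal) : Set ℂ := {z | a < (z.re : EReal) ∧ (z.re : EReal) < b}

/-- `μ` is exponentially finite with respect to the interval `(a,b)`. -/
def ExpFinite (μ : Measure ℝ) (a b : EReal) : Prop :=
  ∀ y : ℝ, a < (y : EReal) → (y : EReal) < b →
    Integrable (fun t : ℝ => Real.exp (-y * t)) μ

lemma quad2 (A B C D : ℂ)
    (h : ∀ u v : ℂ, 0 ≤ A * u * (starRingEnd ℂ) u + B * u * (starRingEnd ℂ) v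
        + C * v * (starRingEnd ℂ) u + D * v * (starRingEnd ℂ) v) :
    0 ≤ A ∧ 0 ≤ D ∧ ‖B‖ ^ 2 ≤ A.re * D.re := by
  have hA : 0 ≤ A := by have := h 1 0; simpa using this
  have hD : 0 ≤ D := by have := h 0 1; simpa using this
  have hAre : 0 ≤ A.re := (Complex.le_def.mp hA).1
  have hAim : A.im = 0 := ((Complex.le_def.mp hA).2).symm
  have hDre : 0 ≤ D.re := (Complex.le_def.mp hD).1
  have hDim : D.im = 0 := ((Complex.le_def.mp hD).2).symm
  -- from u=1, v=1 : imaginary parts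
  have h11 := Complex.le_def.mp (h 1 1)
  have h1I := Complex.le_def.mp (h 1 I)
  have hBC : B.im + C.im = 0 := by
    have := h11.2
    simp [Complex.add_im, hAim, hDim] at this
    linarith
  have hBC2 : C.re = B.re := by
    have := h1I.2
    simp [Complex.add_im, Complex.mul_im, Complex.conj_I, hAim, hDim] at this
    linarith
  refine ⟨hA, hD, ?_⟩
  set n : ℝ := Complex.normSq B with hn
  have hn0 : 0 ≤ n := Complex.normSq_nonneg B
  have habs : ‖B‖ ^ 2 = n := Complex.sq_norm B
  -- for real t : D.re * t^2 - 2*n*t + A.re * n ≥ 0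
  have key : ∀ t : ℝ, 0 ≤ D.re * t ^ 2 - 2 * n * t + A.re * n := by
    intro t
    have := (Complex.le_def.mp (h ((starRingEnd ℂ) B) (-(t : ℂ)))).1
    simp only [Complex.add_re, Complex.mul_re, Complex.mul_im, Complex.conj_re,
      Complex.conj_im, Complex.neg_re, Complex.neg_im, Complex.ofReal_re,
      Complex.ofReal_im, Complex.zero_re, RingHom.map_neg, Complex.conj_ofReal] at this
    have hnB : n = B.re ^ 2 + B.im ^ 2 := by simp [hn, Complex.normSq_apply]; ring
    have hCim : C.im = -B.im := by linarith
    rw [hBC2, hCim] at this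
    rw [hnB]
    linarith [this]
  rw [habs]
  rcases eq_or_lt_of_le hDre with hD0 | hDpos
  · have k1 := key 1
    have k2 := key A.re
    nlinarith [k1, k2]
  · have k := key (n / D.re)
    have h1 : D.re * (n / D.re) ^ 2 = n ^ 2 / D.re := by field_simp
    have h2 : 2 * n * (n / D.re) = 2 * n ^ 2 / D.re := by field_simp
    have k' : n ^ 2 ≤ A.re * n * D.re := by
      rw [h1, h2] at k
      have := mul_le_mul_of_nonneg_left k (le_of_lt hDpos)
      have hne : D.re ≠ 0 := ne_of_gt hDpos
      field_simp at this
      nlinarith [this]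
    nlinarith [k', mul_nonneg hAre hDre, hn0]

/-- Basic inequality for a positive definite function on `S ⊆ ℂ`:
`|f(x+iy)|² ≤ f(i(y-β)) f(i(y+β))`, the two right-hand factors being nonnegative reals. -/
theorem stmt5 (S : Set ℂ) (f : ℂ → ℂ) (hpd : IsPosDefOnC f S) (x y β : ℝ)
    (h1 : (x : ℂ) + (y : ℂ) * I ∈ S) (h2 : -(x : ℂ) + (y : ℂ) * I ∈ S)
    (h3 : ((y - β : ℝ) : ℂ) * I ∈ S) (h4 : ((y + β : ℝ) : ℂ) * I ∈ S) :
    0 ≤ f (((y - β : ℝ) : ℂ) * I) ∧ 0 ≤ f (((y + β : ℝ) : ℂ) * I) ∧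
    ‖f ((x : ℂ) + (y : ℂ) * I)‖ ^ 2 ≤
      (f (((y - β : ℝ) : ℂ) * I)).re * (f (((y + β : ℝ) : ℂ) * I)).re := by
  set z : Fin 2 → ℂ := ![(x : ℂ) + (((y - β) / 2 : ℝ) : ℂ) * I, (((y + β) / 2 : ℝ) : ℂ) * I]
    with hzdef
  have e00 : z 0 - (starRingEnd ℂ) (z 0) = ((y - β : ℝ) : ℂ) * I := by
    simp only [hzdef, Matrix.cons_val_zero, Matrix.cons_val_one, Matrix.head_cons,
      map_add, map_mul, Complex.conj_ofReal, Complex.conj_I]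
    push_cast
    ring
  have e01 : z 0 - (starRingEnd ℂ) (z 1) = (x : ℂ) + (y : ℂ) * I := by
    simp only [hzdef, Matrix.cons_val_zero, Matrix.cons_val_one, Matrix.head_cons,
      map_add, map_mul, Complex.conj_ofReal, Complex.conj_I]
    push_cast
    ring
  have e10 : z 1 - (starRingEnd ℂ) (z 0) = -(x : ℂ) + (y : ℂ) * I := by
    simp only [hzdef, Matrix.cons_val_zero, Matrix.cons_val_one, Matrix.head_cons,
      map_add, map_mul, Complex.conj_ofReal, Complex.conj_I]
    push_cast
    ring
  have e11 : z 1 - (starRingEnd ℂ) (z 1) = ((y + β : ℝ) : ℂ) * I := by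
    simp only [hzdef, Matrix.cons_val_zero, Matrix.cons_val_one, Matrix.head_cons,
      map_add, map_mul, Complex.conj_ofReal, Complex.conj_I]
    push_cast
    ring
  have hz : ∀ k l, z k - (starRingEnd ℂ) (z l) ∈ S := by
    intro k l
    fin_cases k <;> fin_cases l
    · show z 0 - (starRingEnd ℂ) (z 0) ∈ S; rw [e00]; exact h3
    · show z 0 - (starRingEnd ℂ) (z 1) ∈ S; rw [e01]; exact h1
    · show z 1 - (starRingEnd ℂ) (z 0) ∈ S; rw [e10]; exact h2
    · show z 1 - (starRingEnd ℂ) (z 1) ∈ S; rw [e11]; exact h4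
  have key : ∀ u v : ℂ,
      0 ≤ f (((y - β : ℝ) : ℂ) * I) * u * (starRingEnd ℂ) u
        + f ((x : ℂ) + (y : ℂ) * I) * u * (starRingEnd ℂ) v
        + f (-(x : ℂ) + (y : ℂ) * I) * v * (starRingEnd ℂ) u
        + f (((y + β : ℝ) : ℂ) * I) * v * (starRingEnd ℂ) v := by
    intro u v
    have := hpd 2 z hz ![u, v]
    simpa [Fin.sum_univ_two, e00, e01, e10, e11, add_assoc] using this
  exact quad2 _ _ _ _ key
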